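/- Closure under sampling: if the prior on edge weights is ℙ_{v₀,a} = φ_{v₀,a} dσ and one observes a path X₀ = v₀, X₁ = v₁, …, X_n = v_n from the mixture of reversible Markov chains, then the posterior is ℙ_{v_n, (a_e + k_e(Z_n))_{e∈E}}, where k_e(Z_n) is the number of traversals of edge e (doubled for loops); in particular the family {ℙ_{v₀,a}} is a conjugate family. -/

import Mathlib

open MeasureTheory Finset
open scoped ENNReal

namespace Rev

variable {V : Type*} [Fintype V] [DecidableEq V]

/-- Sum of the weights of all edges incident to a vertex (loops counted once). -/
noncomputable def vertWeight (E : Finset (Sym2 V)) (x : Sym2 V → ℝ) (v : V) : ℝ :=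
  ∑ e ∈ E.filter (fun e => v ∈ e), x e

/-- Number of traversals of edge `e` by the path `p` among the first `n` steps
(counted in both directions), doubled for loops: this is `k_e(p)`. -/
def edgeCount (p : ℕ → V) (n : ℕ) (e : Sym2 V) : ℕ :=
  ((Finset.range n).filter (fun i => s(p i, p (i + 1)) = e)).card *
    (if e.IsDiag then 2 else 1)

/-- Number of departures of the path from vertex `v` among the first `n` steps: `k_v(p)`. -/
def departCount (p : ℕ → V) (n : ℕ) (v : V) : ℕ :=
  ((Finset.range n).filter (fun i => p i = v)).card

/-- The path is admissible: every step uses an edge of the graph. -/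
def Admissible (E : Finset (Sym2 V)) (p : ℕ → V) (n : ℕ) : Prop :=
  ∀ i < n, s(p i, p (i + 1)) ∈ E

/-- Probability `Q_{p 0, x}(Z_n = p)` that the reversible Markov chain with edge
weights `x` follows the path `p` for `n` steps. -/
noncomputable def pathProb (E : Finset (Sym2 V)) (x : Sym2 V → ℝ) (p : ℕ → V) (n : ℕ) : ℝ :=
  ∏ i ∈ Finset.range n, x s(p i, p (i + 1)) / vertWeight E x (p i)

/-- Membership in the simplex Δ of normalized positive edge weights. -/
def MemSimplex (E : Finset (Sym2 V)) (x : Sym2 V → ℝ) : Prop :=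
  (∀ e ∈ E, 0 < x e) ∧ (∀ e ∉ E, x e = 0) ∧ ∑ e ∈ E, x e = 1

/-- Probability `P_{p 0, a}(Z_n = p)` that the edge-reinforced random walk with initial
weights `a` follows the path `p` for `n` steps: at each step an incident edge is traversed
with probability proportional to its current weight; the weight of an edge increases by 1
per traversal, by 2 for loops (so the increment equals `edgeCount p i e`). -/
noncomputable def errwProb (E : Finset (Sym2 V)) (a : Sym2 V → ℝ) (p : ℕ → V) (n : ℕ) : ℝ :=
  ∏ i ∈ Finset.range n,
    (a s(p i, p (i + 1)) + edgeCount p i s(p i, p (i + 1))) /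
      (∑ e ∈ E.filter (fun e => p i ∈ e), (a e + edgeCount p i e))

open scoped Classical in
/-- `T` is a spanning tree of `(V, E)`: a subgraph containing all loops whose non-loop
part is a spanning tree in the usual sense. -/
def IsSpanningTree (E T : Finset (Sym2 V)) : Prop :=
  T ⊆ E ∧ (∀ e ∈ E, e.IsDiag → e ∈ T) ∧
  (T.filter (fun e => ¬ e.IsDiag)).card = Fintype.card V - 1 ∧
  (SimpleGraph.fromEdgeSet (↑(T.filter (fun e => ¬ e.IsDiag)) : Set (Sym2 V))).Connected

open scoped Classical in
/-- `det A(x)` of the cycle matrix, via the matrix-tree identity (Proposition 2.6):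
the sum over spanning trees of the product of reciprocal weights of omitted edges. -/
noncomputable def treeSum (E : Finset (Sym2 V)) (x : Sym2 V → ℝ) : ℝ :=
  ∑ T ∈ E.powerset.filter (fun T => IsSpanningTree E T), ∏ e ∈ E \ T, (x e)⁻¹

/-- The normalizing constant `Z_{v₀,a}` of display (14); here
`l = |V| + |E_loop|` and `m = |E|`. -/
noncomputable def Znorm (E : Finset (Sym2 V)) (v₀ : V) (a : Sym2 V → ℝ) : ℝ :=
  (∏ e ∈ E, Real.Gamma (a e)) /
    (Real.Gamma (vertWeight E a v₀ / 2) *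
      (∏ v ∈ Finset.univ.erase v₀, Real.Gamma ((vertWeight E a v + 1) / 2)) *
      (∏ e ∈ E.filter (fun e => e.IsDiag), Real.Gamma ((a e + 1) / 2))) *
  (((E.card - 1).factorial : ℝ) *
     Real.pi ^ ((((Fintype.card V + (E.filter (fun e => e.IsDiag)).card : ℕ) : ℝ) - 1) / 2) /
     2 ^ ((1 : ℝ) - ((Fintype.card V + (E.filter (fun e => e.IsDiag)).card : ℕ) : ℝ) +
        ∑ e ∈ E, a e))

/-- The conjugate prior density `φ_{v₀,a}` of Definition 2.5 (with `det A(x)` expressed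
through the spanning-tree sum of Proposition 2.6). -/
noncomputable def phi (E : Finset (Sym2 V)) (v₀ : V) (a : Sym2 V → ℝ) (x : Sym2 V → ℝ) : ℝ :=
  (Znorm E v₀ a)⁻¹ *
    ((∏ e ∈ E.filter (fun e => ¬ e.IsDiag), x e ^ (a e - 1 / 2)) *
      (∏ e ∈ E.filter (fun e => e.IsDiag), x e ^ (a e / 2 - 1))) /
    (vertWeight E x v₀ ^ (vertWeight E a v₀ / 2) *
      ∏ v ∈ Finset.univ.erase v₀, vertWeight E x v ^ ((vertWeight E a v + 1) / 2)) *
  Real.sqrt (treeSum E x)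

/-- Parametrization of the simplex Δ by the coordinates other than a fixed edge `e₀`. -/
noncomputable def fill (E : Finset (Sym2 V)) (e₀ : ↥E) (y : {e : ↥E // e ≠ e₀} → ℝ) :
    Sym2 V → ℝ :=
  fun s => if h : s ∈ E then
    (if h2 : (⟨s, h⟩ : ↥E) = e₀ then 1 - ∑ i, y i else y ⟨⟨s, h⟩, h2⟩) else 0

/-- The normalized Lebesgue measure σ on the simplex Δ (total mass one). -/
noncomputable def simplexMeasure (E : Finset (Sym2 V)) (e₀ : ↥E) : Measure (Sym2 V → ℝ) :=
  ((E.card - 1).factorial : ℝ≥0∞) •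
    Measure.map (fill E e₀)
      (volume.restrict {y : {e : ↥E // e ≠ e₀} → ℝ | (∀ i, 0 < y i) ∧ (∑ i, y i) < 1})

/-- The prior/posterior measure `ℙ_{v₀,a} = φ_{v₀,a} dσ` on the simplex. -/
noncomputable def priorMeasure (E : Finset (Sym2 V)) (e₀ : ↥E) (v₀ : V) (a : Sym2 V → ℝ) :
    Measure (Sym2 V → ℝ) :=
  (simplexMeasure E e₀).withDensity (fun x => ENNReal.ofReal (phi E v₀ a x))


/-! ### Auxiliary lemmas -/

lemma vertWeight_nonneg (E : Finset (Sym2 V)) {x : Sym2 V → ℝ} (hx : ∀ e ∈ E, 0 ≤ x e) (v : V) :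
    0 ≤ vertWeight E x v :=
  Finset.sum_nonneg fun e he => hx e (Finset.mem_filter.mp he).1

lemma vertWeight_pos (E : Finset (Sym2 V)) {x : Sym2 V → ℝ} (hx : ∀ e ∈ E, 0 < x e)
    {v : V} {e : Sym2 V} (he : e ∈ E) (hv : v ∈ e) : 0 < vertWeight E x v :=
  Finset.sum_pos (fun f hf => hx f (Finset.mem_filter.mp hf).1)
    ⟨e, Finset.mem_filter.mpr ⟨he, hv⟩⟩

/-- Number of traversals of an edge, not doubled for loops. -/
def trav (p : ℕ → V) (n : ℕ) (e : Sym2 V) : ℕ :=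
  ((Finset.range n).filter (fun i => s(p i, p (i + 1)) = e)).card

lemma edgeCount_eq (p : ℕ → V) (n : ℕ) (e : Sym2 V) :
    edgeCount p n e = trav p n e * (if e.IsDiag then 2 else 1) := rfl

/-- The key combinatorial identity: the total number of traversals of edges incident to a
vertex `v` (loops doubled), corrected by the endpoints, is twice the number of departures. -/
lemma key_count (E : Finset (Sym2 V)) (p : ℕ → V) (n : ℕ) (hp : Admissible E p n) (v : V) :
    (∑ e ∈ E.filter (fun e => v ∈ e), edgeCount p n e) + (if p 0 = v then 1 else 0) =
      2 * departCount p n v + (if p n = v then 1 else 0) := by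
  have hstep : ∀ e, edgeCount p n e = ∑ i ∈ Finset.range n,
      (if s(p i, p (i + 1)) = e then (if e.IsDiag then 2 else 1) else 0) := by
    intro e
    rw [edgeCount, Finset.card_filter, Finset.sum_mul]
    refine Finset.sum_congr rfl fun i _ => ?_
    by_cases h : s(p i, p (i + 1)) = e <;> simp [h]
  have h1 : (∑ e ∈ E.filter (fun e => v ∈ e), edgeCount p n e)
      = ∑ i ∈ Finset.range n,
          ((if p i = v then 1 else 0) + (if p (i + 1) = v then 1 else 0)) := by
    simp_rw [hstep]
    rw [Finset.sum_comm]
    refine Finset.sum_congr rfl fun i hi => ?_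
    rw [Finset.sum_ite_eq]
    have he : s(p i, p (i + 1)) ∈ E := hp i (Finset.mem_range.mp hi)
    have hmem : (s(p i, p (i + 1)) ∈ E.filter (fun e => v ∈ e)) ↔ (v = p i ∨ v = p (i + 1)) := by
      simp [Finset.mem_filter, he, Sym2.mem_iff]
    by_cases hh1 : p i = v <;> by_cases hh2 : p (i + 1) = v
    · rw [if_pos (hmem.mpr (Or.inl hh1.symm)),
        if_pos (Sym2.mk_isDiag_iff.mpr (hh1.trans hh2.symm)), if_pos hh1, if_pos hh2]
    · rw [if_pos (hmem.mpr (Or.inl hh1.symm)),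
        if_neg (fun hdiag => hh2 (((Sym2.mk_isDiag_iff.mp hdiag).symm).trans hh1)),
        if_pos hh1, if_neg hh2]
    · rw [if_pos (hmem.mpr (Or.inr hh2.symm)),
        if_neg (fun hdiag => hh1 ((Sym2.mk_isDiag_iff.mp hdiag).trans hh2)),
        if_neg hh1, if_pos hh2]
    · rw [if_neg (fun hm => (hmem.mp hm).elim (fun h => hh1 h.symm) (fun h => hh2 h.symm)),
        if_neg hh1, if_neg hh2]
      omega
  have h2 := Finset.sum_range_succ (fun i => if p i = v then 1 else 0) n
  have h3 := Finset.sum_range_succ' (fun i => if p i = v then 1 else 0) n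
  have h4 : departCount p n v = ∑ i ∈ Finset.range n, (if p i = v then 1 else 0) := by
    rw [departCount, Finset.card_filter]
  rw [h1, Finset.sum_add_distrib, h4]
  omega

lemma vertWeight_add (E : Finset (Sym2 V)) (a : Sym2 V → ℝ) (p : ℕ → V) (n : ℕ) (v : V) :
    vertWeight E (fun e => a e + (edgeCount p n e : ℝ)) v
      = vertWeight E a v + ((∑ e ∈ E.filter (fun e => v ∈ e), edgeCount p n e : ℕ) : ℝ) := by
  simp [vertWeight, Finset.sum_add_distrib]

lemma prod_path_eq (E : Finset (Sym2 V)) (x : Sym2 V → ℝ) (p : ℕ → V) (n : ℕ)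
    (hp : Admissible E p n) :
    ∏ i ∈ Finset.range n, x s(p i, p (i + 1)) = ∏ e ∈ E, x e ^ (trav p n e) := by
  rw [← Finset.prod_fiberwise_of_maps_to (g := fun i => s(p i, p (i + 1)))
      (fun i hi => hp i (Finset.mem_range.mp hi)) (fun i => x s(p i, p (i + 1)))]
  refine Finset.prod_congr rfl fun e he => ?_
  rw [Finset.prod_congr rfl (fun i hi => congrArg x (Finset.mem_filter.mp hi).2),
    Finset.prod_const, trav]

lemma prod_path_vert (E : Finset (Sym2 V)) (x : Sym2 V → ℝ) (p : ℕ → V) (n : ℕ) :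
    ∏ i ∈ Finset.range n, vertWeight E x (p i)
      = ∏ v : V, vertWeight E x v ^ departCount p n v := by
  rw [← Finset.prod_fiberwise_of_maps_to (g := fun i => p i)
      (fun i _ => Finset.mem_univ (p i)) (fun i => vertWeight E x (p i))]
  refine Finset.prod_congr rfl fun v hv => ?_
  rw [Finset.prod_congr rfl
      (fun i hi => congrArg (vertWeight E x) (Finset.mem_filter.mp hi).2),
    Finset.prod_const, departCount]

lemma numer_eq (E : Finset (Sym2 V)) (x : Sym2 V → ℝ) (hx : ∀ e ∈ E, 0 < x e)
    (a : Sym2 V → ℝ) (p : ℕ → V) (n : ℕ) (hp : Admissible E p n) :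
    (∏ e ∈ E.filter (fun e => ¬ e.IsDiag), x e ^ (a e + (edgeCount p n e : ℝ) - 1 / 2)) *
      (∏ e ∈ E.filter (fun e => e.IsDiag), x e ^ ((a e + (edgeCount p n e : ℝ)) / 2 - 1)) =
    ((∏ e ∈ E.filter (fun e => ¬ e.IsDiag), x e ^ (a e - 1 / 2)) *
      (∏ e ∈ E.filter (fun e => e.IsDiag), x e ^ (a e / 2 - 1))) *
      ∏ i ∈ Finset.range n, x s(p i, p (i + 1)) := by
  rw [prod_path_eq E x p n hp,
    ← Finset.prod_filter_mul_prod_filter_not E (fun e => e.IsDiag)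
      (fun e => x e ^ trav p n e)]
  have h1 : ∀ e ∈ E.filter (fun e => ¬ e.IsDiag),
      x e ^ (a e + (edgeCount p n e : ℝ) - 1 / 2)
        = x e ^ (a e - 1 / 2) * x e ^ (trav p n e : ℕ) := by
    intro e he
    obtain ⟨heE, hd⟩ := Finset.mem_filter.mp he
    rw [← Real.rpow_natCast (x e) (trav p n e), ← Real.rpow_add (hx e heE)]
    congr 1
    rw [edgeCount_eq, if_neg hd]
    push_cast
    ring
  have h2 : ∀ e ∈ E.filter (fun e => e.IsDiag),
      x e ^ ((a e + (edgeCount p n e : ℝ)) / 2 - 1)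
        = x e ^ (a e / 2 - 1) * x e ^ (trav p n e : ℕ) := by
    intro e he
    obtain ⟨heE, hd⟩ := Finset.mem_filter.mp he
    rw [← Real.rpow_natCast (x e) (trav p n e), ← Real.rpow_add (hx e heE)]
    congr 1
    rw [edgeCount_eq, if_pos hd]
    push_cast
    ring
  rw [Finset.prod_congr rfl h1, Finset.prod_congr rfl h2,
    Finset.prod_mul_distrib, Finset.prod_mul_distrib]
  ring

lemma denom_eq (E : Finset (Sym2 V)) (x : Sym2 V → ℝ)
    (hW : ∀ v, 0 < vertWeight E x v) (a : Sym2 V → ℝ) (p : ℕ → V) (n : ℕ)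
    (hp : Admissible E p n) :
    vertWeight E x (p n) ^ (vertWeight E (fun e => a e + (edgeCount p n e : ℝ)) (p n) / 2) *
      ∏ v ∈ Finset.univ.erase (p n),
        vertWeight E x v
          ^ ((vertWeight E (fun e => a e + (edgeCount p n e : ℝ)) v + 1) / 2) =
    (vertWeight E x (p 0) ^ (vertWeight E a (p 0) / 2) *
      ∏ v ∈ Finset.univ.erase (p 0),
        vertWeight E x v ^ ((vertWeight E a v + 1) / 2)) *
      ∏ i ∈ Finset.range n, vertWeight E x (p i) := by
  set b : Sym2 V → ℝ := fun e => a e + (edgeCount p n e : ℝ) with hb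
  have hfull : ∀ (v₀ : V) (c : Sym2 V → ℝ),
      vertWeight E x v₀ ^ (vertWeight E c v₀ / 2) *
        ∏ v ∈ Finset.univ.erase v₀, vertWeight E x v ^ ((vertWeight E c v + 1) / 2)
      = ∏ v : V, vertWeight E x v
          ^ ((vertWeight E c v + (if v₀ = v then 0 else 1)) / 2) := by
    intro v₀ c
    rw [← Finset.mul_prod_erase Finset.univ
        (fun v => vertWeight E x v ^ ((vertWeight E c v + (if v₀ = v then 0 else 1)) / 2))
        (Finset.mem_univ v₀)]
    congr 1
    · simp
    · refine Finset.prod_congr rfl fun v hv => ?_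
      rw [if_neg (Ne.symm (Finset.mem_erase.mp hv).1)]
  rw [hfull, hfull, prod_path_vert E x p n, ← Finset.prod_mul_distrib]
  refine Finset.prod_congr rfl fun v _ => ?_
  rw [← Real.rpow_natCast (vertWeight E x v) (departCount p n v),
    ← Real.rpow_add (hW v)]
  congr 1
  have hk := key_count E p n hp v
  have hk' : ((∑ e ∈ E.filter (fun e => v ∈ e), edgeCount p n e : ℕ) : ℝ)
      + (if p 0 = v then (1 : ℝ) else 0)
      = 2 * (departCount p n v : ℝ) + (if p n = v then (1 : ℝ) else 0) := by
    rw [show ((∑ e ∈ E.filter (fun e => v ∈ e), edgeCount p n e : ℕ) : ℝ)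
          + (if p 0 = v then (1 : ℝ) else 0)
        = (((∑ e ∈ E.filter (fun e => v ∈ e), edgeCount p n e)
          + (if p 0 = v then 1 else 0) : ℕ) : ℝ) by push_cast; ring, hk]
    push_cast
    ring
  have hWb : vertWeight E b v
      = vertWeight E a v
        + ((∑ e ∈ E.filter (fun e => v ∈ e), edgeCount p n e : ℕ) : ℝ) :=
    vertWeight_add E a p n v
  by_cases h0 : p 0 = v <;> by_cases hn : p n = v <;>
    simp only [h0, hn, if_pos, if_neg, if_true, if_false] at hk' ⊢ <;>
    rw [hWb] <;> ring_nf <;> linarith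

lemma Znorm_pos (E : Finset (Sym2 V)) (v₀ : V) (b : Sym2 V → ℝ) (hb : ∀ e ∈ E, 0 < b e)
    (hv : 0 < vertWeight E b v₀) : 0 < Znorm E v₀ b := by
  have hb0 : ∀ v, 0 ≤ vertWeight E b v := vertWeight_nonneg E (fun e he => (hb e he).le)
  unfold Znorm
  apply mul_pos
  · apply div_pos
    · exact Finset.prod_pos fun e he => Real.Gamma_pos_of_pos (hb e he)
    · refine mul_pos (mul_pos ?_ ?_) ?_
      · exact Real.Gamma_pos_of_pos (by linarith)
      · exact Finset.prod_pos fun v _ =>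
          Real.Gamma_pos_of_pos (by have := hb0 v; linarith)
      · exact Finset.prod_pos fun e he =>
          Real.Gamma_pos_of_pos (by have := hb e (Finset.mem_filter.mp he).1; linarith)
  · refine div_pos (mul_pos ?_ ?_) ?_
    · exact_mod_cast Nat.factorial_pos _
    · exact Real.rpow_pos_of_pos Real.pi_pos _
    · exact Real.rpow_pos_of_pos two_pos _

lemma phi_eq_zero (E : Finset (Sym2 V)) (v₀ : V) (b : Sym2 V → ℝ)
    (hb : ∀ v, 0 ≤ vertWeight E b v) {x : Sym2 V → ℝ} {v : V}
    (hvne : v ≠ v₀) (hxv : vertWeight E x v = 0) :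
    phi E v₀ b x = 0 := by
  unfold phi
  rw [Finset.prod_eq_zero (Finset.mem_erase.mpr ⟨hvne, Finset.mem_univ v⟩)
      (by rw [hxv]; exact Real.zero_rpow (by have := hb v; positivity))]
  simp

/-- Proposition 4.1, closure under sampling: if the prior on normalized edge
weights is `ℙ_{v₀,a} = φ_{v₀,a} dσ` and one observes an admissible path
`X₀ = v₀, …, Xₙ = vₙ` from the mixture of reversible Markov chains, then the posterior is
`ℙ_{vₙ, (a_e + k_e(Z_n))_e}`: the posterior density, which is proportional to
`φ_{v₀,a}(x) · Q_{v₀,x}(Z_n = p)`, equals a positive constant (the normalization) times the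
conjugate density `φ_{vₙ, a + k(Z_n)}(x)` on the simplex; in particular the family of
priors `{ℙ_{v₀,a}}` is a conjugate family. -/
theorem closure_under_sampling (E : Finset (Sym2 V))
    (hconn : (SimpleGraph.fromEdgeSet
      (↑(E.filter (fun e => ¬ e.IsDiag)) : Set (Sym2 V))).Connected)
    (a : Sym2 V → ℝ) (ha : ∀ e ∈ E, 0 < a e)
    (p : ℕ → V) (n : ℕ) (hp : Admissible E p n) :
    ∃ c : ℝ, 0 < c ∧ ∀ x : Sym2 V → ℝ, MemSimplex E x →
      phi E (p 0) a x * pathProb E x p n =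
        c * phi E (p n) (fun e => a e + edgeCount p n e) x := by
  by_cases hn : n = 0
  · subst hn
    refine ⟨1, one_pos, fun x _ => ?_⟩
    have hE : (fun e => a e + (edgeCount p 0 e : ℝ)) = a := by
      funext e; simp [edgeCount]
    simp [pathProb, hE]
  · have hn1 : 0 < n := Nat.pos_of_ne_zero hn
    have ha' : ∀ e ∈ E, 0 < a e + (edgeCount p n e : ℝ) := fun e he => by
      have h1 := ha e he
      have h2 : (0 : ℝ) ≤ (edgeCount p n e : ℝ) := Nat.cast_nonneg _
      linarith
    have he0 : s(p 0, p 1) ∈ E := hp 0 hn1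
    have hen : s(p (n - 1), p n) ∈ E := by
      have h := hp (n - 1) (by omega)
      have h2 : n - 1 + 1 = n := by omega
      rwa [h2] at h
    have hZ0 : 0 < Znorm E (p 0) a :=
      Znorm_pos E _ a ha (vertWeight_pos E ha he0 (Sym2.mem_mk_left _ _))
    have hZ1 : 0 < Znorm E (p n) (fun e => a e + (edgeCount p n e : ℝ)) :=
      Znorm_pos E _ _ ha' (vertWeight_pos E ha' hen (Sym2.mem_mk_right _ _))
    refine ⟨Znorm E (p n) (fun e => a e + (edgeCount p n e : ℝ)) / Znorm E (p 0) a,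
      div_pos hZ1 hZ0, fun x hx => ?_⟩
    obtain ⟨hx1, hx2, hx3⟩ := hx
    by_cases hW : ∀ v, 0 < vertWeight E x v
    · have hD0 : 0 < vertWeight E x (p 0) ^ (vertWeight E a (p 0) / 2) *
          ∏ v ∈ Finset.univ.erase (p 0),
            vertWeight E x v ^ ((vertWeight E a v + 1) / 2) :=
        mul_pos (Real.rpow_pos_of_pos (hW (p 0)) _)
          (Finset.prod_pos fun v _ => Real.rpow_pos_of_pos (hW v) _)
      have hPW : 0 < ∏ i ∈ Finset.range n, vertWeight E x (p i) :=
        Finset.prod_pos fun i _ => hW (p i)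
      unfold phi pathProb
      rw [Finset.prod_div_distrib, numer_eq E x hx1 a p n hp, denom_eq E x hW a p n hp]
      field_simp
      ring
    · push_neg at hW
      obtain ⟨v, hv⟩ := hW
      have hv0 : vertWeight E x v = 0 :=
        le_antisymm hv (vertWeight_nonneg E (fun e he => (hx1 e he).le) v)
      have hvp0 : v ≠ p 0 := by
        intro h
        rw [h] at hv0
        exact absurd hv0
          (ne_of_gt (vertWeight_pos E hx1 he0 (Sym2.mem_mk_left _ _)))
      have hvpn : v ≠ p n := by
        intro h
        rw [h] at hv0
        exact absurd hv0
          (ne_of_gt (vertWeight_pos E hx1 hen (Sym2.mem_mk_right _ _)))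
      rw [phi_eq_zero E (p 0) a (vertWeight_nonneg E fun e he => (ha e he).le) hvp0 hv0,
        phi_eq_zero E (p n) _ (vertWeight_nonneg E fun e he => (ha' e he).le) hvpn hv0]
      ring

end Rev
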